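/- For all nonnegative integers n and d, Σ_{s=0}^{2n−2} f(d,s) = Σ_{μ ∈ Λ_{d,n}} μ₂. -/

import Mathlib

open Finset Polynomial

namespace Capelli

/-- The set `ℙ_{k,n}` of pairs `μ = (μ₁, μ₂)` of nonnegative integers with `μ₁ ≥ μ₂`,
`μ₁ + μ₂ = k` and `μ₂ ≤ n`. -/
def Pkn (n k : ℕ) : Finset (ℕ × ℕ) :=
  (Finset.range (k + 1) ×ˢ Finset.range (k + 1)).filter
    (fun μ => μ.2 ≤ μ.1 ∧ μ.1 + μ.2 = k ∧ μ.2 ≤ n)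

/-- The set `ℙ*_{k,n}` of pairs `ν = (ν₁, ν₂)` of nonnegative integers with `ν₁ ≥ ν₂`,
`ν₁ + ν₂ = k` and `ν₂ ≥ ⌊k/2⌋ - n` (written here additively to avoid truncated subtraction). -/
def PknStar (n k : ℕ) : Finset (ℕ × ℕ) :=
  (Finset.range (k + 1) ×ˢ Finset.range (k + 1)).filter
    (fun ν => ν.2 ≤ ν.1 ∧ ν.1 + ν.2 = k ∧ k / 2 ≤ ν.2 + n)

/-- `Λ_{d,n} = ⋃_{k=0}^d ℙ_{k,n}`. -/
def Lam (n d : ℕ) : Finset (ℕ × ℕ) := (Finset.range (d + 1)).biUnion (Pkn n)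

/-- `Λ*_{d,n} = ⋃_{k=0}^d ℙ*_{k,n}`. -/
def LamStar (n d : ℕ) : Finset (ℕ × ℕ) := (Finset.range (d + 1)).biUnion (PknStar n)

/-- `ℓ_ν = min(ν₁ - ν₂, 2n + 1 - (ν₁ - ν₂))`. -/
def ell (n : ℕ) (ν : ℕ × ℕ) : ℕ := min (ν.1 - ν.2) (2 * n + 1 - (ν.1 - ν.2))

/-- `Λ_{d,n,j} = {μ ∈ Λ_{d,n} : μ₂ ≥ j}`. -/
def Lamj (n d j : ℕ) : Finset (ℕ × ℕ) := (Lam n d).filter (fun μ => j ≤ μ.2)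

/-- `Λ*_{d,n,j} = {ν ∈ Λ*_{d,n} : ν₂ ≤ ⌊|ν|/2⌋ - j}`. -/
def LamStarj (n d j : ℕ) : Finset (ℕ × ℕ) :=
  (LamStar n d).filter (fun ν => ν.2 + j ≤ (ν.1 + ν.2) / 2)

/-- `ν_{(j)} = (|ν| - ⌊|ν|/2⌋ + j, ⌊|ν|/2⌋ - j)`. -/
def nuSub (ν : ℕ × ℕ) (j : ℕ) : ℕ × ℕ :=
  (ν.1 + ν.2 - (ν.1 + ν.2) / 2 + j, (ν.1 + ν.2) / 2 - j)

/-- The polynomial `λ_{μ,ν}(x) = ((2x+1)ℓ_ν - ℓ_ν²)^{μ₂} (ν₁+ν₂)^{μ₁-μ₂} ∈ ℤ[x]`. -/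
noncomputable def lamPoly (n : ℕ) (μ ν : ℕ × ℕ) : Polynomial ℤ :=
  ((2 * X + 1) * C (ell n ν : ℤ) - C ((ell n ν : ℤ) ^ 2)) ^ μ.2 *
    C ((ν.1 + ν.2 : ℕ) : ℤ) ^ (μ.1 - μ.2)

/-- The row ordering: `μ ⪯ μ'` iff `μ₂ < μ₂'`, or `μ₂ = μ₂'` and `μ₁ ≤ μ₁'`. -/
def rowRel (μ μ' : ℕ × ℕ) : Prop := μ.2 < μ'.2 ∨ (μ.2 = μ'.2 ∧ μ.1 ≤ μ'.1)

/-- The column ordering: `ν ⩽ ν'` iff `⌊(ν₁-ν₂)/2⌋ < ⌊(ν₁'-ν₂')/2⌋`, or these are equal and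
`|ν| ≤ |ν'|`.  (A further tie-break by the first coordinate is added so that the relation is
antisymmetric on all of `ℕ × ℕ`; on `Λ*_{d,n}` a tie in the first two comparisons forces
equality, so this agrees with the ordering of the paper there.) -/
def colRel (ν ν' : ℕ × ℕ) : Prop :=
  (ν.1 - ν.2) / 2 < (ν'.1 - ν'.2) / 2 ∨
    ((ν.1 - ν.2) / 2 = (ν'.1 - ν'.2) / 2 ∧
      (ν.1 + ν.2 < ν'.1 + ν'.2 ∨ (ν.1 + ν.2 = ν'.1 + ν'.2 ∧ ν.1 ≤ ν'.1)))

instance : DecidableRel rowRel := fun a b =>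
  inferInstanceAs (Decidable (a.2 < b.2 ∨ (a.2 = b.2 ∧ a.1 ≤ b.1)))

instance : IsTrans (ℕ × ℕ) rowRel := ⟨by intro a b c; unfold rowRel; omega⟩

instance : IsTotal (ℕ × ℕ) rowRel := ⟨by intro a b; unfold rowRel; omega⟩

instance : IsAntisymm (ℕ × ℕ) rowRel :=
  ⟨by intro a b h1 h2; unfold rowRel at h1 h2; rw [Prod.ext_iff]; omega⟩

instance : DecidableRel colRel := fun a b =>
  inferInstanceAs (Decidable ((a.1 - a.2) / 2 < (b.1 - b.2) / 2 ∨
    ((a.1 - a.2) / 2 = (b.1 - b.2) / 2 ∧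
      (a.1 + a.2 < b.1 + b.2 ∨ (a.1 + a.2 = b.1 + b.2 ∧ a.1 ≤ b.1)))))

instance : IsTrans (ℕ × ℕ) colRel := ⟨by intro a b c; unfold colRel; omega⟩

instance : IsTotal (ℕ × ℕ) colRel := ⟨by intro a b; unfold colRel; omega⟩

instance : IsAntisymm (ℕ × ℕ) colRel :=
  ⟨by intro a b h1 h2; unfold colRel at h1 h2; rw [Prod.ext_iff]; omega⟩

/-- The elements of `Λ_{d,n}` listed in increasing order for `⪯`. -/
def rowList (n d : ℕ) : List (ℕ × ℕ) := (Lam n d).sort rowRel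

/-- The elements of `Λ*_{d,n}` listed in increasing order for `⩽`. -/
def colList (n d : ℕ) : List (ℕ × ℕ) := (LamStar n d).sort colRel

/-- The elements of `Λ_{d,n,j}` listed in increasing order for `⪯`. -/
def rowListJ (n d j : ℕ) : List (ℕ × ℕ) := (Lamj n d j).sort rowRel

/-- The elements of `Λ*_{d,n,j}` listed in increasing order for `⩽`. -/
def colListJ (n d j : ℕ) : List (ℕ × ℕ) := (LamStarj n d j).sort colRel

/-- The matrix `M_d = [λ_{μ,ν}]` with rows indexed by `Λ_{d,n}` (ordered by `⪯`) and columns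
indexed by `Λ*_{d,n}` (ordered by `⩽`); since `|Λ_{d,n}| = |Λ*_{d,n}|` the column list has
length `(Lam n d).card` and the `getD` access below always hits an actual entry. -/
noncomputable def Md (n d : ℕ) : Matrix (Fin (Lam n d).card) (Fin (Lam n d).card) (Polynomial ℤ) :=
  fun i j => lamPoly n ((rowList n d).getD i.val (0, 0)) ((colList n d).getD j.val (0, 0))

/-- The matrix `M_d' = [(2ℓ_ν)^{μ₂}(ν₁+ν₂)^{μ₁-μ₂}]` of leading coefficients. -/
def Md' (n d : ℕ) : Matrix (Fin (Lam n d).card) (Fin (Lam n d).card) ℤ :=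
  fun i j =>
    let μ := (rowList n d).getD i.val (0, 0)
    let ν := (colList n d).getD j.val (0, 0)
    (2 * (ell n ν : ℤ)) ^ μ.2 * ((ν.1 + ν.2 : ℕ) : ℤ) ^ (μ.1 - μ.2)

/-- `S_{μ,ν,j}` with `m = μ₂ - j`: the complete homogeneous symmetric polynomial of degree `m`
evaluated at `ℓ_{ν_{(0)}}, …, ℓ_{ν_{(j-1)}}, ℓ_ν`, i.e. the sum over all `(j+1)`-tuples
`(a₀, …, a_j)` of nonnegative integers with `a₀ + ⋯ + a_j = m` of
`ℓ_{ν_{(0)}}^{a₀} ⋯ ℓ_{ν_{(j-1)}}^{a_{j-1}} ℓ_ν^{a_j}`. -/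
def Shs (n : ℕ) (ν : ℕ × ℕ) (j m : ℕ) : ℕ :=
  ∑ a ∈ Finset.Nat.antidiagonalTuple (j + 1) m,
    ∏ i : Fin (j + 1), (if (i : ℕ) < j then ell n (nuSub ν (i : ℕ)) else ell n ν) ^ a i

/-- The matrix `N_j = [2^{μ₂-j}(ν₁+ν₂)^{μ₁-μ₂} S_{μ,ν,j}]` with rows indexed by `Λ_{d,n,j}`
(ordered by `⪯`) and columns indexed by `Λ*_{d,n,j}` (ordered by `⩽`). -/
def Ndj (n d j : ℕ) : Matrix (Fin (Lamj n d j).card) (Fin (Lamj n d j).card) ℤ :=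
  fun i i' =>
    let μ := (rowListJ n d j).getD i.val (0, 0)
    let ν := (colListJ n d j).getD i'.val (0, 0)
    2 ^ (μ.2 - j) * ((ν.1 + ν.2 : ℕ) : ℤ) ^ (μ.1 - μ.2) * (Shs n ν j (μ.2 - j) : ℤ)

/-- The Vandermonde matrix `V(a, a+1, …, a+s-1) = [(a+j)^{i-1}]_{1 ≤ i,j ≤ s}` (0-indexed
as `[(a+j)^i]_{0 ≤ i,j ≤ s-1}`), with the convention `0⁰ = 1`. -/
def vandInt (a s : ℕ) : Matrix (Fin s) (Fin s) ℤ :=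
  fun i j => ((a + (j : ℕ) : ℕ) : ℤ) ^ (i : ℕ)

/-- `f(d,s) = #{(ν,ν') ∈ Λ*_{d,n} × Λ*_{d,n} : |ν| = |ν'|, ℓ_{ν'} < ℓ_ν, ℓ_ν + ℓ_{ν'} - 1 = s}`. -/
def fds (n d : ℕ) (s : ℤ) : ℕ :=
  (((LamStar n d) ×ˢ (LamStar n d)).filter
    (fun p => p.1.1 + p.1.2 = p.2.1 + p.2.2 ∧ ell n p.2 < ell n p.1 ∧
      (ell n p.1 : ℤ) + (ell n p.2 : ℤ) - 1 = s)).card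

/-- `g_k(s) = #{(ν,ν') ∈ ℙ*_{k,n} × ℙ*_{k,n} : ℓ_{ν'} < ℓ_ν, ℓ_ν + ℓ_{ν'} - 1 = s}`. -/
def gks (n k : ℕ) (s : ℤ) : ℕ :=
  ((PknStar n k ×ˢ PknStar n k).filter
    (fun p => ell n p.2 < ell n p.1 ∧ (ell n p.1 : ℤ) + (ell n p.2 : ℤ) - 1 = s)).card

lemma mem_PknStar' {n k : ℕ} {ν : ℕ × ℕ} :
    ν ∈ PknStar n k ↔ ν.2 ≤ ν.1 ∧ ν.1 + ν.2 = k ∧ k / 2 ≤ ν.2 + n := by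
  simp only [PknStar, Finset.mem_filter, Finset.mem_product, Finset.mem_range]
  omega

lemma mem_Pkn' {n k : ℕ} {μ : ℕ × ℕ} :
    μ ∈ Pkn n k ↔ μ.2 ≤ μ.1 ∧ μ.1 + μ.2 = k ∧ μ.2 ≤ n := by
  simp only [Pkn, Finset.mem_filter, Finset.mem_product, Finset.mem_range]
  omega

lemma mem_LamStar' {n d : ℕ} {ν : ℕ × ℕ} :
    ν ∈ LamStar n d ↔ ν.2 ≤ ν.1 ∧ ν.1 + ν.2 ≤ d ∧ (ν.1 + ν.2) / 2 ≤ ν.2 + n := by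
  simp only [LamStar, Finset.mem_biUnion, Finset.mem_range, mem_PknStar']
  constructor
  · rintro ⟨k, hk, h1, h2, h3⟩; omega
  · rintro ⟨h1, h2, h3⟩; exact ⟨ν.1 + ν.2, by omega, h1, rfl, h3⟩

lemma ell_le {n : ℕ} (ν : ℕ × ℕ) : ell n ν ≤ n := by unfold ell; omega

lemma ell_inj {n k : ℕ} {ν ν' : ℕ × ℕ} (h : ν ∈ PknStar n k) (h' : ν' ∈ PknStar n k)
    (he : ell n ν = ell n ν') : ν = ν' := by
  rw [mem_PknStar'] at h h'
  unfold ell at he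
  rw [Prod.ext_iff]
  omega

lemma card_PknStar (n k : ℕ) : (PknStar n k).card = min (k / 2) n + 1 := by
  rw [← Finset.card_range (min (k / 2) n + 1)]
  apply Finset.card_nbij' (i := fun ν => k / 2 - ν.2)
    (j := fun j => (k - (k / 2 - j), k / 2 - j))
  · intro ν hν; rw [Finset.mem_coe, mem_PknStar'] at hν; simp only [Finset.mem_coe, Finset.mem_range]; omega
  · intro j hj; simp only [Finset.mem_coe, Finset.mem_range] at hj; rw [Finset.mem_coe, mem_PknStar']; simp only; omega
  · intro ν hν; rw [Finset.mem_coe, mem_PknStar'] at hν; rw [Prod.ext_iff]; simp only; omega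
  · intro j hj; simp only [Finset.mem_coe, Finset.mem_range] at hj; simp only; omega

lemma pair_count (n k : ℕ) :
    ((PknStar n k ×ˢ PknStar n k).filter (fun p => ell n p.2 < ell n p.1)).card
      = ∑ j ∈ Finset.range (min (k / 2) n + 1), j := by
  classical
  set S := PknStar n k with hS
  set A := (S ×ˢ S).filter (fun p => ell n p.2 < ell n p.1) with hA
  set B := (S ×ˢ S).filter (fun p => ell n p.1 < ell n p.2) with hB
  set C := (S ×ˢ S).filter (fun p => ell n p.1 = ell n p.2) with hC
  have hAB : A.card = B.card := by
    apply Finset.card_nbij' (i := Prod.swap) (j := Prod.swap)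
    · intro p hp
      simp only [hA, hB, Finset.mem_coe, Finset.mem_filter, Finset.mem_product] at *
      exact ⟨⟨hp.1.2, hp.1.1⟩, hp.2⟩
    · intro p hp
      simp only [hA, hB, Finset.mem_coe, Finset.mem_filter, Finset.mem_product] at *
      exact ⟨⟨hp.1.2, hp.1.1⟩, hp.2⟩
    · intro p _; exact Prod.swap_swap p
    · intro p _; exact Prod.swap_swap p
  have hCS : C.card = S.card := by
    apply Finset.card_nbij' (i := fun p => p.1) (j := fun ν => (ν, ν))
    · intro p hp
      simp only [hC, Finset.mem_coe, Finset.mem_filter, Finset.mem_product] at hp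
      exact hp.1.1
    · intro ν hν
      simp only [hC, Finset.mem_coe, Finset.mem_filter, Finset.mem_product] at hν ⊢
      exact ⟨⟨hν, hν⟩, by trivial⟩
    · rintro ⟨a, b⟩ hp
      simp only [hC, Finset.mem_coe, Finset.mem_filter, Finset.mem_product] at hp
      have h2 := ell_inj hp.1.1 hp.1.2 hp.2
      simpa using h2
    · intro ν _; rfl
  have hBC : Disjoint B C := by
    rw [Finset.disjoint_left]
    intro p hp hp'
    simp only [hB, hC, Finset.mem_filter] at hp hp'
    omega
  have hsplit : A.card + (B.card + C.card) = S.card * S.card := by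
    rw [← Finset.card_union_of_disjoint hBC]
    have hunion : B ∪ C = (S ×ˢ S).filter (fun p => ¬ ell n p.2 < ell n p.1) := by
      ext p
      simp only [hB, hC, Finset.mem_union, Finset.mem_filter]
      constructor
      · rintro (⟨h1, h2⟩ | ⟨h1, h2⟩) <;> exact ⟨h1, by omega⟩
      · rintro ⟨h1, h2⟩
        rcases lt_or_eq_of_le (not_lt.mp h2) with h | h
        · exact Or.inl ⟨h1, h⟩
        · exact Or.inr ⟨h1, h⟩
    rw [hunion, hA, Finset.card_filter_add_card_filter_not, Finset.card_product]
  have hcard := card_PknStar n k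
  set m := min (k / 2) n with hm
  have hGauss := Finset.sum_range_id_mul_two (m + 1)
  simp only [Nat.add_sub_cancel] at hGauss
  have hsq : (m + 1) * (m + 1) = (m + 1) * m + (m + 1) := by ring
  rw [hAB] at hsplit
  rw [hCS, hcard] at hsplit
  -- hsplit : B.card + (B.card + (m+1)) = (m+1)*(m+1)
  rw [hAB]
  omega

theorem sum_Pkn (n k : ℕ) :
    ∑ μ ∈ Pkn n k, μ.2 = ∑ j ∈ Finset.range (min (k / 2) n + 1), j := by
  apply Finset.sum_nbij' (i := fun μ => μ.2) (j := fun j => (k - j, j))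
  · intro μ hμ; rw [mem_Pkn'] at hμ; simp only [Finset.mem_range]; omega
  · intro j hj; simp only [Finset.mem_range] at hj; rw [mem_Pkn']; simp; omega
  · intro μ hμ; rw [mem_Pkn'] at hμ; rw [Prod.ext_iff]; simp; omega
  · intro j hj; rfl
  · intro μ _; rfl

/-- For all nonnegative integers `n` and `d`,
`Σ_{s=0}^{2n-2} f(d,s) = Σ_{μ ∈ Λ_{d,n}} μ₂`. -/
theorem sum_fds (n d : ℕ) :
    ∑ s ∈ Finset.range (2 * n - 1), fds n d (s : ℤ) = ∑ μ ∈ Lam n d, μ.2 := by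
  classical
  set T := ((LamStar n d) ×ˢ (LamStar n d)).filter
    (fun p => p.1.1 + p.1.2 = p.2.1 + p.2.2 ∧ ell n p.2 < ell n p.1) with hT
  have hA : ∑ s ∈ Finset.range (2 * n - 1), fds n d (s : ℤ) = T.card := by
    rw [Finset.card_eq_sum_card_fiberwise
      (f := fun p => ell n p.1 + ell n p.2 - 1) (t := Finset.range (2 * n - 1))
      (fun p hp => by
        simp only [hT, Finset.mem_coe, Finset.mem_filter] at hp
        have h1 := ell_le (n := n) p.1
        have h2 := ell_le (n := n) p.2
        simp only [Finset.mem_coe, Finset.mem_range]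
        omega)]
    apply Finset.sum_congr rfl
    intro s hs
    unfold fds
    congr 1
    ext p
    simp only [hT, Finset.mem_filter, Finset.mem_product]
    constructor
    · rintro ⟨hp, h1, h2, h3⟩
      exact ⟨⟨hp, h1, h2⟩, by omega⟩
    · rintro ⟨⟨hp, h1, h2⟩, h3⟩
      exact ⟨hp, h1, h2, by omega⟩
  have hB : T.card = ∑ k ∈ Finset.range (d + 1),
      ((PknStar n k ×ˢ PknStar n k).filter (fun p => ell n p.2 < ell n p.1)).card := by
    rw [Finset.card_eq_sum_card_fiberwise (f := fun p => p.1.1 + p.1.2)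
      (t := Finset.range (d + 1))
      (fun p hp => by
        simp only [hT, Finset.mem_coe, Finset.mem_filter, Finset.mem_product, mem_LamStar'] at hp
        simp only [Finset.mem_coe, Finset.mem_range]
        omega)]
    apply Finset.sum_congr rfl
    intro k hk
    simp only [Finset.mem_range] at hk
    congr 1
    ext p
    simp only [hT, Finset.mem_filter, Finset.mem_product, mem_LamStar', mem_PknStar']
    simp only [ell]
    omega
  have hE : ∑ μ ∈ Lam n d, μ.2 = ∑ k ∈ Finset.range (d + 1), ∑ μ ∈ Pkn n k, μ.2 := by
    apply Finset.sum_biUnion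
    intro a _ b _ hab
    apply Finset.disjoint_left.mpr
    intro μ hμa hμb
    rw [mem_Pkn'] at hμa hμb
    exact hab (by omega)
  rw [hA, hB, hE]
  exact Finset.sum_congr rfl
    (fun k _ => (pair_count n k).trans (sum_Pkn n k).symm)

end Capelli
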